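/- arXiv:2207.05941 — 4 statements merged into one kernel-verified Lean document; each statement's English description precedes it below -/
import Mathlib

section
/- Let (g, H, e, L, S, T) be a homotopy Cartan calculus. Then the map L : g → H is a morphism of differential graded Lie algebras; that is, d(L_θ) = L_{δθ} and [L_θ, L_ρ] = L_{[θ,ρ]} for all θ, ρ ∈ g. -/
/-- A differential graded Lie algebra over `ℚ` (cohomological convention): a
`ℚ`-module with an internal `ℤ`-grading, a differential `d` of degree `+1`, and a
graded Lie bracket for which `d` is a derivation. -/
structure DGLie where
  M : Type*
  [grp : AddCommGroup M]
  [mod : Module ℚ M]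
  gr : ℤ → Submodule ℚ M
  gr_top : iSup gr = ⊤
  d : M →ₗ[ℚ] M
  d_deg : ∀ n : ℤ, ∀ x ∈ gr n, d x ∈ gr (n + 1)
  d_sq : ∀ x, d (d x) = 0
  bracket : M →ₗ[ℚ] M →ₗ[ℚ] M
  bracket_deg : ∀ m n : ℤ, ∀ x ∈ gr m, ∀ y ∈ gr n, bracket x y ∈ gr (m + n)
  antisymm : ∀ m n : ℤ, ∀ x ∈ gr m, ∀ y ∈ gr n,
    bracket x y = -(((-1 : ℚ) ^ (m * n)) • bracket y x)
  jacobi : ∀ m n : ℤ, ∀ x ∈ gr m, ∀ y ∈ gr n, ∀ z,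
    bracket x (bracket y z)
      = bracket (bracket x y) z + ((-1 : ℚ) ^ (m * n)) • bracket y (bracket x z)
  d_der : ∀ m : ℤ, ∀ x ∈ gr m, ∀ y,
    d (bracket x y) = bracket (d x) y + ((-1 : ℚ) ^ m) • bracket x (d y)

attribute [instance] DGLie.grp DGLie.mod

/-- A mixed differential graded Lie algebra `(ℋ, d, B, [ , ])`: a dg Lie algebra
together with a second differential `B` of degree `-1` with `B ∘ B = 0`,
`dB + Bd = 0`, which is also a derivation of the bracket. -/
structure MixedDGLie extends DGLie where
  B : M →ₗ[ℚ] M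
  B_deg : ∀ n : ℤ, ∀ x ∈ gr n, B x ∈ gr (n - 1)
  B_sq : ∀ x, B (B x) = 0
  dB : ∀ x, d (B x) + B (d x) = 0
  B_der : ∀ m : ℤ, ∀ x ∈ gr m, ∀ y,
    B (bracket x y) = bracket (B x) y + ((-1 : ℚ) ^ m) • bracket x (B y)

/-- A homotopy Cartan calculus `(𝔤, ℋ, e, L, S, T)` in the sense of
Fiorenza--Kowalzig: a homotopy pre-Cartan calculus `(𝔤, ℋ, e, L, S)` together
with a Gelfan'd--Daletskiĭ--Tsygan homotopy `T`. -/
structure CartanCalculus (G : DGLie) (H : MixedDGLie) where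
  e : G.M →ₗ[ℚ] H.M
  L : G.M →ₗ[ℚ] H.M
  S : G.M →ₗ[ℚ] H.M
  T : G.M →ₗ[ℚ] G.M →ₗ[ℚ] H.M
  e_deg : ∀ n : ℤ, ∀ θ ∈ G.gr n, e θ ∈ H.gr (n + 1)
  L_deg : ∀ n : ℤ, ∀ θ ∈ G.gr n, L θ ∈ H.gr n
  S_deg : ∀ n : ℤ, ∀ θ ∈ G.gr n, S θ ∈ H.gr (n - 1)
  T_deg : ∀ m n : ℤ, ∀ θ ∈ G.gr m, ∀ ρ ∈ G.gr n, T θ ρ ∈ H.gr (m + n)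
  cartan : ∀ θ, L θ = H.B (e θ) + H.d (S θ) + S (G.d θ)
  de : ∀ θ, H.d (e θ) + e (G.d θ) = 0
  BS : ∀ θ, H.B (S θ) = 0
  eL : ∀ m : ℤ, ∀ θ ∈ G.gr m, ∀ ρ,
    H.bracket (e θ) (L ρ) - e (G.bracket θ ρ)
      = H.d (T θ ρ) - T (G.d θ) ρ - ((-1 : ℚ) ^ m) • T θ (G.d ρ)
  SL : ∀ θ ρ, H.bracket (S θ) (L ρ) - S (G.bracket θ ρ) = H.B (T θ ρ)

/-- For a homotopy Cartan calculus `(𝔤, ℋ, e, L, S, T)`, the Lie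
derivative `L : 𝔤 → ℋ` is a morphism of differential graded Lie algebras:
`d (L θ) = L (δ θ)` and `[L θ, L ρ] = L [θ, ρ]` for all `θ, ρ ∈ 𝔤`. -/
theorem cartan_L_is_dgla_morphism (G : DGLie) (H : MixedDGLie) (P : CartanCalculus G H) :
    (∀ θ : G.M, H.d (P.L θ) = P.L (G.d θ)) ∧
    (∀ θ ρ : G.M, H.bracket (P.L θ) (P.L ρ) = P.L (G.bracket θ ρ)) := by

  have hdL : ∀ θ : G.M, H.d (P.L θ) = P.L (G.d θ) := by
    intro θ
    have h3 : H.d (H.B (P.e θ)) = -(H.B (H.d (P.e θ))) :=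
      eq_neg_of_add_eq_zero_left (H.dB (P.e θ))
    have h4 : H.d (P.e θ) = -(P.e (G.d θ)) :=
      eq_neg_of_add_eq_zero_left (P.de θ)
    rw [P.cartan θ, P.cartan (G.d θ), G.d_sq θ, map_zero, map_add, map_add,
      H.d_sq (P.S θ), h3, h4, map_neg, neg_neg, add_zero, add_zero]
  refine ⟨hdL, ?_⟩
  -- key homogeneous case
  have key : ∀ m : ℤ, ∀ θ ∈ G.gr m, ∀ ρ : G.M,
      H.bracket (P.L θ) (P.L ρ) = P.L (G.bracket θ ρ) := by
    intro m θ hθ ρ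
    have hBL : H.B (P.L ρ) = 0 := by
      have hdbs : H.B (H.d (P.S ρ)) = -(H.d (H.B (P.S ρ))) :=
        eq_neg_of_add_eq_zero_right (H.dB (P.S ρ))
      rw [P.cartan ρ, map_add, map_add, H.B_sq, hdbs, P.BS, map_zero, neg_zero,
        P.BS, zero_add, zero_add]
    have hs1 : ((-1 : ℚ)) ^ (m + 1) = -((-1 : ℚ)) ^ m := by
      rw [zpow_add₀ (by norm_num : (-1 : ℚ) ≠ 0), zpow_one]; ring
    have hs2 : ((-1 : ℚ)) ^ (m - 1) = -((-1 : ℚ)) ^ m := by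
      rw [sub_eq_add_neg, zpow_add₀ (by norm_num : (-1 : ℚ) ≠ 0)]
      norm_num
    -- A1
    have A1 : H.bracket (P.L θ) (P.L ρ)
        = H.bracket (H.B (P.e θ)) (P.L ρ) + H.bracket (H.d (P.S θ)) (P.L ρ)
          + H.bracket (P.S (G.d θ)) (P.L ρ) := by
      rw [P.cartan θ, map_add, map_add, LinearMap.add_apply, LinearMap.add_apply]
    -- A2
    have A2 : H.bracket (H.B (P.e θ)) (P.L ρ) = H.B (H.bracket (P.e θ) (P.L ρ)) := by
      rw [H.B_der (m + 1) (P.e θ) (P.e_deg m θ hθ) (P.L ρ), hBL, map_zero,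
        smul_zero, add_zero]
    -- A3
    have A3 : H.d (H.bracket (P.S θ) (P.L ρ))
        = H.bracket (H.d (P.S θ)) (P.L ρ)
          - ((-1 : ℚ) ^ m) • H.bracket (P.S θ) (P.L (G.d ρ)) := by
      rw [H.d_der (m - 1) (P.S θ) (P.S_deg m θ hθ) (P.L ρ), hdL ρ, hs2, neg_smul,
        ← sub_eq_add_neg]
    -- A4 : apply B to eL
    have heL := P.eL m θ hθ ρ
    have A4 : H.B (H.bracket (P.e θ) (P.L ρ)) - H.B (P.e (G.bracket θ ρ))
        = H.B (H.d (P.T θ ρ)) - H.B (P.T (G.d θ) ρ)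
          - ((-1 : ℚ) ^ m) • H.B (P.T θ (G.d ρ)) := by
      have := congrArg H.B heL
      simpa only [map_sub, map_smul] using this
    -- A5 : apply d to SL
    have A5 : H.d (H.bracket (P.S θ) (P.L ρ)) - H.d (P.S (G.bracket θ ρ))
        = H.d (H.B (P.T θ ρ)) := by
      have := congrArg H.d (P.SL θ ρ)
      simpa only [map_sub] using this
    have A6 := P.SL θ (G.d ρ)
    have A7 := P.SL (G.d θ) ρ
    have A8 : H.d (H.B (P.T θ ρ)) = -(H.B (H.d (P.T θ ρ))) :=
      eq_neg_of_add_eq_zero_left (H.dB (P.T θ ρ))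
    have A9 := P.cartan (G.bracket θ ρ)
    have A10 : P.S (G.d (G.bracket θ ρ))
        = P.S (G.bracket (G.d θ) ρ) + ((-1 : ℚ) ^ m) • P.S (G.bracket θ (G.d ρ)) := by
      rw [G.d_der m θ hθ ρ, map_add, map_smul]
    -- combine everything
    linear_combination (norm := module) A1 + A2 - A3 + A4 + A5 + A8
      + ((-1 : ℚ) ^ m) • A6 + A7 - A10 - A9
  intro θ ρ
  have hθ : θ ∈ iSup G.gr := by rw [G.gr_top]; exact Submodule.mem_top
  refine Submodule.iSup_induction G.gr (motive := fun θ => ∀ ρ : G.M,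
      H.bracket (P.L θ) (P.L ρ) = P.L (G.bracket θ ρ)) hθ
    (fun m θ hθ ρ => key m θ hθ ρ) ?_ ?_ ρ
  · intro ρ; simp
  · intro x y hx hy ρ
    simp only [map_add, LinearMap.add_apply, hx ρ, hy ρ]
end

section
/- For every θ, ρ ∈ Der(∧V), the derivations e_θ, L_θ of 𝓛 satisfy: L_θ = [s, e_θ]; [d, e_θ] + e_{δθ} = 0 where δθ = [d, θ]; and [e_θ, L_ρ] = e_{[θ,ρ]}. Consequently the tuple (Der(∧V), Der(𝓛), e, L, S = 0, T = 0) is a homotopy Cartan calculus, where Der(𝓛) carries the mixed differential graded Lie algebra structure with differentials [d, −] and [s, −]. -/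
/-- A non-negatively (cohomologically) graded differential graded algebra over `ℚ`,
presented by an internal `ℤ`-grading. -/
structure GDGA where
  A : Type*
  [ring : Ring A]
  [alg : Algebra ℚ A]
  gr : ℤ → Submodule ℚ A
  gr_top : iSup gr = ⊤
  gr_neg : ∀ n : ℤ, n < 0 → gr n = ⊥
  one_mem : (1 : A) ∈ gr 0
  mul_mem : ∀ {m n : ℤ} {a b : A}, a ∈ gr m → b ∈ gr n → a * b ∈ gr (m + n)
  d : A →ₗ[ℚ] A
  d_deg : ∀ {n : ℤ} {a : A}, a ∈ gr n → d a ∈ gr (n + 1)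
  d_sq : ∀ a, d (d a) = 0
  d_leib : ∀ {m : ℤ} {a : A}, a ∈ gr m → ∀ b,
    d (a * b) = d a * b + ((-1 : ℚ) ^ m) • (a * d b)

attribute [instance] GDGA.ring GDGA.alg

/-- A derivation of degree `t` of a graded differential graded algebra. -/
def GDGA.IsDer (D : GDGA) (t : ℤ) (θ : D.A →ₗ[ℚ] D.A) : Prop :=
  (∀ n : ℤ, ∀ a ∈ D.gr n, θ a ∈ D.gr (n + t)) ∧
  ∀ m : ℤ, ∀ a ∈ D.gr m, ∀ b, θ (a * b) = θ a * b + ((-1 : ℚ) ^ (t * m)) • (a * θ b)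

/-- Data of a Sullivan algebra `(∧V, d)` together with the associated model
`𝓛 = ∧V ⊗ ∧V̄` of the free loop space: `φ : ∧V → 𝓛` is the canonical inclusion,
`s` is the degree `-1` derivation with `s v = v̄`, `s v̄ = 0` and `[d, s] = 0`,
and `𝓛` is generated as an algebra by `φ(V)` and `s (φ(V))`. -/
structure SullivanLoop where
  AV : GDGA
  LL : GDGA
  commAV : ∀ {m n : ℤ} {a b : AV.A}, a ∈ AV.gr m → b ∈ AV.gr n →
    a * b = ((-1 : ℚ) ^ (m * n)) • (b * a)
  commLL : ∀ {m n : ℤ} {a b : LL.A}, a ∈ LL.gr m → b ∈ LL.gr n →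
    a * b = ((-1 : ℚ) ^ (m * n)) • (b * a)
  V : Submodule ℚ AV.A
  V_gen : Algebra.adjoin ℚ (V : Set AV.A) = ⊤
  φ : AV.A →ₐ[ℚ] LL.A
  φ_gr : ∀ n : ℤ, ∀ a ∈ AV.gr n, φ a ∈ LL.gr n
  φ_d : ∀ a, LL.d (φ a) = φ (AV.d a)
  s : LL.A →ₗ[ℚ] LL.A
  s_der : LL.IsDer (-1) s
  s_sq : ∀ x, s (s x) = 0
  d_s : ∀ x, LL.d (s x) + s (LL.d x) = 0
  gen : Algebra.adjoin ℚ
    ((⇑φ '' (V : Set AV.A)) ∪ ((fun v => s (φ v)) '' (V : Set AV.A))) = ⊤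

/-- The derivation `L_θ` of `𝓛` associated to a derivation `θ` of `∧V` of degree
`t`: it is the derivation of degree `t` with `L_θ v = θ v` and
`L_θ v̄ = (-1)^{deg θ} s (θ v)`. -/
def SullivanLoop.IsLSul (S : SullivanLoop) (t : ℤ) (θ : S.AV.A →ₗ[ℚ] S.AV.A)
    (F : S.LL.A →ₗ[ℚ] S.LL.A) : Prop :=
  S.LL.IsDer t F ∧ (∀ v ∈ S.V, F (S.φ v) = S.φ (θ v)) ∧
    ∀ v ∈ S.V, F (S.s (S.φ v)) = ((-1 : ℚ) ^ t) • S.s (S.φ (θ v))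

/-- The contraction `e_θ` of `𝓛` associated to a derivation `θ` of `∧V` of degree
`t`: it is the derivation of degree `t + 1` with `e_θ v = 0` and
`e_θ v̄ = (-1)^{deg θ} θ v`. -/
def SullivanLoop.IsESul (S : SullivanLoop) (t : ℤ) (θ : S.AV.A →ₗ[ℚ] S.AV.A)
    (F : S.LL.A →ₗ[ℚ] S.LL.A) : Prop :=
  S.LL.IsDer (t + 1) F ∧ (∀ v ∈ S.V, F (S.φ v) = 0) ∧
    ∀ v ∈ S.V, F (S.s (S.φ v)) = ((-1 : ℚ) ^ t) • S.φ (θ v)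

private lemma e_add (a b : ℤ) : ((-1 : ℚ)) ^ (a + b) = (-1) ^ a * (-1) ^ b :=
  zpow_add₀ (by norm_num) a b

private lemma e_even {a : ℤ} (h : a % 2 = 0) : ((-1:ℚ)) ^ a = 1 := by
  obtain ⟨k, rfl⟩ : ∃ k, a = 2 * k := ⟨a / 2, by omega⟩
  rw [zpow_mul]; norm_num

private lemma e_eq {a b : ℤ} (h : (a - b) % 2 = 0) : ((-1:ℚ)) ^ a = (-1) ^ b := by
  have ha : a = (a - b) + b := by ring
  rw [ha, e_add, e_even h, one_mul]

private lemma e_sq (a : ℤ) : ((-1:ℚ)) ^ a * (-1) ^ a = 1 := by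
  rw [← e_add]; exact e_even (by omega)

private lemma e_inv (a : ℤ) : ((-1:ℚ)) ^ (-a) * (-1) ^ a = 1 := by
  rw [← e_add]; exact e_even (by omega)

/-- Master lemma: a `φ`-twisted derivation that kills a generating set is zero. -/
private lemma twisted_zero (D1 D2 : GDGA) (φ : D1.A →ₐ[ℚ] D2.A) (G : Set D1.A)
    (hgen : Algebra.adjoin ℚ G = ⊤)
    (F : D1.A →ₗ[ℚ] D2.A) (k : ℤ)
    (hL : ∀ m : ℤ, ∀ a ∈ D1.gr m, ∀ b,
      F (a * b) = F a * φ b + ((-1:ℚ) ^ (k * m)) • (φ a * F b))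
    (hG : ∀ g ∈ G, F g = 0) : ∀ x, F x = 0 := by
  have h1 : F 1 = 0 := by
    have h := hL 0 1 D1.one_mem 1
    simp only [mul_one, map_one, one_mul, mul_zero, zpow_zero, one_smul] at h
    have h2 : F 1 + F 1 = F 1 + 0 := by rw [add_zero, ← h]
    exact (add_left_cancel h2)
  have hA : ∀ a b, F b = 0 → F (a * b) = F a * φ b := by
    intro a
    have ha : a ∈ ⨆ n, D1.gr n := by rw [D1.gr_top]; exact Submodule.mem_top
    refine Submodule.iSup_induction D1.gr
      (motive := fun a => ∀ b, F b = 0 → F (a * b) = F a * φ b) ha ?_ ?_ ?_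
    · intro m a ham b hb
      rw [hL m a ham b, hb, mul_zero, smul_zero, add_zero]
    · intro b hb; simp
    · intro x y hx hy b hb
      rw [add_mul, map_add, map_add, add_mul, hx b hb, hy b hb]
  intro x
  have hx : x ∈ Algebra.adjoin ℚ G := by rw [hgen]; trivial
  induction hx using Algebra.adjoin_induction with
  | mem g hg => exact hG g hg
  | algebraMap r =>
      rw [Algebra.algebraMap_eq_smul_one, map_smul, h1, smul_zero]
  | add x y hx hy ihx ihy => rw [map_add, ihx, ihy, add_zero]
  | mul x y hx hy ihx ihy => rw [hA x y ihy, ihx, zero_mul]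
private lemma isDer_sub {D : GDGA} {t : ℤ} {F G : D.A →ₗ[ℚ] D.A}
    (hF : D.IsDer t F) (hG : D.IsDer t G) : D.IsDer t (F - G) := by
  refine ⟨fun n a ha => ?_, fun m a ha b => ?_⟩
  · exact Submodule.sub_mem _ (hF.1 n a ha) (hG.1 n a ha)
  · simp only [LinearMap.sub_apply, hF.2 m a ha b, hG.2 m a ha b]
    simp only [sub_mul, mul_sub, smul_sub]; module

private lemma isDer_bracket {D : GDGA} {k l : ℤ} {F G : D.A →ₗ[ℚ] D.A}
    (hF : D.IsDer k F) (hG : D.IsDer l G) :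
    D.IsDer (k + l) (F ∘ₗ G - ((-1:ℚ) ^ (k * l)) • (G ∘ₗ F)) := by
  obtain ⟨hFd, hFl⟩ := hF; obtain ⟨hGd, hGl⟩ := hG
  refine ⟨fun n a ha => ?_, fun m a ha b => ?_⟩
  · simp only [LinearMap.sub_apply, LinearMap.smul_apply, LinearMap.comp_apply]
    refine Submodule.sub_mem _ ?_ (Submodule.smul_mem _ _ ?_)
    · have := hFd _ _ (hGd n a ha)
      rwa [show n + l + k = n + (k + l) by ring] at this
    · have := hGd _ _ (hFd n a ha)
      rwa [show n + k + l = n + (k + l) by ring] at this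
  · simp only [LinearMap.sub_apply, LinearMap.smul_apply, LinearMap.comp_apply]
    rw [hGl m a ha b, map_add, map_smul, hFl m a ha b, map_add, map_smul,
      hFl _ _ (hGd m a ha) b, hFl m a ha (G b), hGl _ _ (hFd m a ha) b,
      hGl m a ha (F b),
      show k * (m + l) = k * m + k * l by ring,
      show l * (m + k) = l * m + k * l by ring,
      show (k + l) * m = k * m + l * m by ring, e_add, e_add, e_add]
    simp only [mul_sub, sub_mul, smul_sub, smul_smul, smul_mul_assoc, mul_smul_comm]
    match_scalars
    · ring
    · ring
    · linear_combination (-((-1:ℚ) ^ (l * m))) * e_sq (k * l)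
    · ring
    · ring
    · ring

private lemma isDer_add {D : GDGA} {t : ℤ} {F G : D.A →ₗ[ℚ] D.A}
    (hF : D.IsDer t F) (hG : D.IsDer t G) : D.IsDer t (F + G) := by
  refine ⟨fun n a ha => ?_, fun m a ha b => ?_⟩
  · exact Submodule.add_mem _ (hF.1 n a ha) (hG.1 n a ha)
  · simp only [LinearMap.add_apply, hF.2 m a ha b, hG.2 m a ha b]
    simp only [add_mul, mul_add, smul_add]; module
/-- For derivations `θ, ρ` of the Sullivan algebra `(∧V, d)`
(with `V¹ = 0`), the derivations `e_θ, L_θ` of `𝓛 = ∧V ⊗ ∧V̄` satisfy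
`L_θ = [s, e_θ]`, `[d, e_θ] + e_{δθ} = 0` (where `δθ = [d, θ]`) and
`[e_θ, L_ρ] = e_{[θ, ρ]}`; consequently
`(Der(∧V), Der(𝓛), e, L, S = 0, T = 0)` is a homotopy Cartan calculus. -/
theorem sullivan_homotopy_cartan (S : SullivanLoop)
    (hV1 : S.V ⊓ S.AV.gr 1 = ⊥)
    (t r : ℤ) (θ ρ : S.AV.A →ₗ[ℚ] S.AV.A)
    (hθ : S.AV.IsDer t θ) (hρ : S.AV.IsDer r ρ)
    (Lθ eθ Lρ eδ ebr : S.LL.A →ₗ[ℚ] S.LL.A)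
    (hLθ : S.IsLSul t θ Lθ) (heθ : S.IsESul t θ eθ) (hLρ : S.IsLSul r ρ Lρ)
    -- `e` applied to the differential `δθ = [d, θ]` of `θ` in `Der(∧V)`
    (heδ : S.IsESul (t + 1) (S.AV.d ∘ₗ θ - ((-1 : ℚ) ^ t) • (θ ∘ₗ S.AV.d)) eδ)
    -- `e` applied to the bracket `[θ, ρ]` in `Der(∧V)`
    (hebr : S.IsESul (t + r) (θ ∘ₗ ρ - ((-1 : ℚ) ^ (t * r)) • (ρ ∘ₗ θ)) ebr) :
    Lθ = S.s ∘ₗ eθ + ((-1 : ℚ) ^ t) • (eθ ∘ₗ S.s)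
      ∧ S.LL.d ∘ₗ eθ + ((-1 : ℚ) ^ t) • (eθ ∘ₗ S.LL.d) + eδ = 0
      ∧ eθ ∘ₗ Lρ - ((-1 : ℚ) ^ ((t + 1) * r)) • (Lρ ∘ₗ eθ) = ebr := by
  obtain ⟨hLθd, hLθφ, hLθs⟩ := hLθ
  obtain ⟨heθd, heθφ, heθs⟩ := heθ
  obtain ⟨hLρd, hLρφ, hLρs⟩ := hLρ
  obtain ⟨heδd, heδφ, heδs⟩ := heδ
  obtain ⟨hebrd, hebrφ, hebrs⟩ := hebr
  have hd : S.LL.IsDer 1 S.LL.d := ⟨fun n a ha => S.LL.d_deg ha, fun m a ha b => by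
    rw [S.LL.d_leib ha b, show (1 : ℤ) * m = m by ring]⟩
  -- `eθ` kills the image of `φ`
  have hCθ : ∀ a, eθ (S.φ a) = 0 := by
    have h := twisted_zero S.AV S.LL S.φ _ S.V_gen (eθ ∘ₗ S.φ.toLinearMap) (t + 1)
      (fun m a ha b => by
        simp only [LinearMap.comp_apply, AlgHom.toLinearMap_apply, map_mul]
        exact heθd.2 m (S.φ a) (S.φ_gr m a ha) (S.φ b))
      (fun g hg => by simpa using heθφ g hg)
    intro a; simpa using h a
  -- `Lρ ∘ φ = φ ∘ ρ`
  have hEρ : ∀ a, Lρ (S.φ a) = S.φ (ρ a) := by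
    have h := twisted_zero S.AV S.LL S.φ _ S.V_gen
      (Lρ ∘ₗ S.φ.toLinearMap - S.φ.toLinearMap ∘ₗ ρ) r
      (fun m a ha b => by
        simp only [LinearMap.sub_apply, LinearMap.comp_apply,
          AlgHom.toLinearMap_apply, map_mul]
        rw [hLρd.2 m (S.φ a) (S.φ_gr m a ha) (S.φ b), hρ.2 m a ha b, map_add,
          map_smul, map_mul, map_mul]
        simp only [sub_mul, mul_sub, smul_sub]
        abel)
      (fun g hg => by
        simp only [LinearMap.sub_apply, LinearMap.comp_apply,
          AlgHom.toLinearMap_apply]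
        rw [hLρφ g hg, sub_self])
    intro a
    have h2 := h a
    simp only [LinearMap.sub_apply, LinearMap.comp_apply,
      AlgHom.toLinearMap_apply] at h2
    exact sub_eq_zero.mp h2
  -- `eθ (s (φ a)) = (-1)^t • φ (θ a)`
  have hDθ : ∀ a, eθ (S.s (S.φ a)) = ((-1 : ℚ) ^ t) • S.φ (θ a) := by
    have h := twisted_zero S.AV S.LL S.φ _ S.V_gen
      (eθ ∘ₗ S.s ∘ₗ S.φ.toLinearMap - ((-1 : ℚ) ^ t) • (S.φ.toLinearMap ∘ₗ θ)) t
      (fun m a ha b => by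
        simp only [LinearMap.sub_apply, LinearMap.comp_apply, LinearMap.smul_apply,
          AlgHom.toLinearMap_apply, map_mul]
        have hsa : S.s (S.φ a) ∈ S.LL.gr (m + (-1)) :=
          S.s_der.1 m (S.φ a) (S.φ_gr m a ha)
        rw [S.s_der.2 m (S.φ a) (S.φ_gr m a ha) (S.φ b), map_add, map_smul,
          heθd.2 _ _ hsa (S.φ b), heθd.2 m (S.φ a) (S.φ_gr m a ha) (S.s (S.φ b)),
          hCθ b, hCθ a, hθ.2 m a ha b, map_add, map_smul, map_mul, map_mul]
        simp only [mul_zero, zero_mul, smul_zero, add_zero, zero_add]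
        rw [show ((t + 1) * m) = t * m + m by ring, show (-1 * m) = -m by ring, e_add]
        simp only [sub_mul, mul_sub, smul_sub, smul_mul_assoc, mul_smul_comm, smul_smul]
        match_scalars
        · ring
        · linear_combination ((-1:ℚ) ^ (t * m)) * e_inv m
        · ring
        · ring)
      (fun g hg => by
        simp only [LinearMap.sub_apply, LinearMap.comp_apply, LinearMap.smul_apply,
          AlgHom.toLinearMap_apply]
        rw [heθs g hg, sub_self])
    intro a
    have h2 := h a
    simp only [LinearMap.sub_apply, LinearMap.comp_apply, LinearMap.smul_apply,
      AlgHom.toLinearMap_apply] at h2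
    exact sub_eq_zero.mp h2
  -- vanishing criterion on 𝓛
  have main : ∀ (k : ℤ) (D : S.LL.A →ₗ[ℚ] S.LL.A),
      (∀ m : ℤ, ∀ a ∈ S.LL.gr m, ∀ b,
        D (a * b) = D a * b + ((-1 : ℚ) ^ (k * m)) • (a * D b)) →
      (∀ v ∈ S.V, D (S.φ v) = 0) → (∀ v ∈ S.V, D (S.s (S.φ v)) = 0) → D = 0 := by
    intro k D hL h1 h2
    ext x
    have h := twisted_zero S.LL S.LL (AlgHom.id ℚ S.LL.A) _ S.gen D k
      (fun m a ha b => by simpa using hL m a ha b)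
      (by
        rintro g (⟨v, hv, rfl⟩ | ⟨v, hv, rfl⟩)
        · exact h1 v hv
        · exact h2 v hv)
    simpa using h x
  have ht1 : ((-1 : ℚ)) ^ (t + 1) = -(-1) ^ t := by rw [e_add]; simp
  have hsgn1 : ((-1 : ℚ) ^ ((-1 : ℤ) * (t + 1))) = -(-1) ^ t := by
    rw [e_eq (show ((-1) * (t + 1) - (t + 1)) % 2 = 0 by omega)]; exact ht1
  have hsgn2 : ((-1 : ℚ) ^ ((1 : ℤ) * (t + 1))) = -(-1) ^ t := by
    rw [show (1 : ℤ) * (t + 1) = t + 1 by ring]; exact ht1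
  have hds : ∀ x, S.LL.d (S.s x) = -S.s (S.LL.d x) := fun x =>
    eq_neg_of_add_eq_zero_left (S.d_s x)
  -- Statement 1
  have hb1 := isDer_bracket S.s_der heθd
  rw [show (-1 : ℤ) + (t + 1) = t by ring] at hb1
  have hD1 : (S.s ∘ₗ eθ - ((-1 : ℚ) ^ ((-1 : ℤ) * (t + 1))) • (eθ ∘ₗ S.s)) - Lθ = 0 := by
    apply main t _ (isDer_sub hb1 hLθd).2
    · intro v hv
      simp only [LinearMap.sub_apply, LinearMap.smul_apply, LinearMap.comp_apply]
      rw [heθφ v hv, map_zero, heθs v hv, hLθφ v hv, hsgn1, smul_smul]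
      match_scalars
      linear_combination e_sq t
    · intro v hv
      simp only [LinearMap.sub_apply, LinearMap.smul_apply, LinearMap.comp_apply]
      rw [heθs v hv, map_smul, S.s_sq, map_zero, smul_zero, hLθs v hv,
        sub_zero, sub_self]
  refine ⟨?_, ?_, ?_⟩
  · -- L_θ = [s, e_θ]
    have h := sub_eq_zero.mp hD1
    rw [← h, hsgn1]
    module
  · -- [d, e_θ] + e_{δθ} = 0
    have hb2 := isDer_bracket hd heθd
    rw [show (1 : ℤ) + (t + 1) = t + 1 + 1 by ring] at hb2
    have hD2 : (S.LL.d ∘ₗ eθ - ((-1 : ℚ) ^ ((1 : ℤ) * (t + 1))) • (eθ ∘ₗ S.LL.d)) + eδ = 0 := by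
      apply main (t + 1 + 1) _ (isDer_add hb2 heδd).2
      · intro v hv
        simp only [LinearMap.add_apply, LinearMap.sub_apply, LinearMap.smul_apply,
          LinearMap.comp_apply]
        rw [heθφ v hv, map_zero, S.φ_d, hCθ, heδφ v hv, smul_zero]
        simp
      · intro v hv
        simp only [LinearMap.add_apply, LinearMap.sub_apply, LinearMap.smul_apply,
          LinearMap.comp_apply]
        rw [heθs v hv, map_smul, S.φ_d, hds, S.φ_d, map_neg, hDθ, heδs v hv,
          hsgn2, ht1]
        simp only [LinearMap.sub_apply, LinearMap.smul_apply, LinearMap.comp_apply,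
          map_sub, map_smul, smul_sub, smul_smul, smul_neg, neg_smul]
        match_scalars <;> ring
    rw [hsgn2] at hD2
    rw [← hD2]; module
  · -- [e_θ, L_ρ] = e_{[θ, ρ]}
    have hb3 := isDer_bracket heθd hLρd
    rw [show (t + 1) + r = t + r + 1 by ring] at hb3
    have hD3 : (eθ ∘ₗ Lρ - ((-1 : ℚ) ^ ((t + 1) * r)) • (Lρ ∘ₗ eθ)) - ebr = 0 := by
      apply main (t + r + 1) _ (isDer_sub hb3 hebrd).2
      · intro v hv
        simp only [LinearMap.sub_apply, LinearMap.smul_apply, LinearMap.comp_apply]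
        rw [hLρφ v hv, hCθ, heθφ v hv, map_zero, hebrφ v hv, smul_zero]
        simp
      · intro v hv
        simp only [LinearMap.sub_apply, LinearMap.smul_apply, LinearMap.comp_apply]
        rw [hLρs v hv, map_smul, hDθ, heθs v hv, map_smul, hEρ, hebrs v hv]
        simp only [LinearMap.sub_apply, LinearMap.smul_apply, LinearMap.comp_apply,
          map_sub, map_smul, smul_sub, smul_smul]
        rw [show (t + 1) * r = t * r + r by ring]
        simp only [e_add]
        match_scalars <;> ring
    exact sub_eq_zero.mp hD3
end

section
/- Let (∧V, d) be a Sullivan algebra with V¹ = 0 and θ ∈ Der(∧V). Then Θ∘L_θ = L_θ∘Θ as maps C_*(∧V) → 𝓛, where on the left L_θ denotes the Hochschild-complex Lie derivative and on the right the Sullivan-model derivation of 𝓛. -/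
/-- The sign exponent `ε_i = |a₀| + ∑_{j<i} |s a_j|` attached to a word
`a₀[a₁|⋯|aₙ]` with `|a₀| = n0` and `|a_j|` listed in `ds`. -/
def eps (n0 : ℤ) (ds : List ℤ) (i : ℕ) : ℤ :=
  n0 + (((ds.take i).map (fun n => n - 1)).sum)

/-- The (normalized) Hochschild chain complex `C_*(A) = (A ⊗ T(s Ā), d₁ + d₂)`
of an augmented DGA `(A, d)`, presented axiomatically: `elt a₀ [a₁, …, aₙ]`
denotes the elementary tensor `a₀[a₁|⋯|aₙ]`; such tensors with homogeneous
entries in the augmentation ideal span `C`, and the operators `d₁`, `d₂`,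
the cyclic operator `t`, the extra degeneracy `s` and Connes' operator
`B = s ∘ (1 + t + ⋯ + tⁿ)` are determined by the usual formulas on them. -/
structure Hochschild (D : GDGA) where
  C : Type*
  [grp : AddCommGroup C]
  [mod : Module ℚ C]
  aug : D.A →ₐ[ℚ] ℚ
  aug_d : ∀ a, aug (D.d a) = 0
  elt : D.A → List D.A → C
  spanning : ∀ x : C, x ∈ Submodule.span ℚ
      {y : C | ∃ (n0 : ℤ) (a0 : D.A) (raw : List D.A) (ds : List ℤ),
        a0 ∈ D.gr n0 ∧ List.Forall₂ (fun a k => a ∈ D.gr k ∧ aug a = 0) raw ds ∧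
        y = elt a0 raw}
  d1 : C →ₗ[ℚ] C
  d2 : C →ₗ[ℚ] C
  t : C →ₗ[ℚ] C
  sC : C →ₗ[ℚ] C
  Bo : C →ₗ[ℚ] C
  d1_mk : ∀ (n0 : ℤ) (a0 : D.A), a0 ∈ D.gr n0 →
    ∀ (raw : List D.A) (ds : List ℤ),
      List.Forall₂ (fun a k => a ∈ D.gr k ∧ aug a = 0) raw ds →
      d1 (elt a0 raw) = elt (D.d a0) raw
        + ∑ i ∈ Finset.range raw.length,
            ((-1 : ℚ) ^ (eps n0 ds i + 1)) • elt a0 (raw.set i (D.d (raw.getD i 0)))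
  d2_nil : ∀ a0 : D.A, d2 (elt a0 []) = 0
  d2_mk : ∀ (n0 : ℤ) (a0 : D.A), a0 ∈ D.gr n0 →
    ∀ (raw : List D.A) (ds : List ℤ),
      List.Forall₂ (fun a k => a ∈ D.gr k ∧ aug a = 0) raw ds → raw ≠ [] →
      d2 (elt a0 raw) =
        ((-1 : ℚ) ^ n0) • elt (a0 * raw.getD 0 1) raw.tail
        + (∑ j ∈ Finset.range (raw.length - 1),
            ((-1 : ℚ) ^ (eps n0 ds (j + 1))) •
              elt a0 (raw.take j ++ (raw.getD j 1 * raw.getD (j + 1) 1) :: raw.drop (j + 2)))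
        + ((-1 : ℚ) ^ (eps n0 ds (raw.length - 1) * ((ds.getLast?).getD 0 - 1) + 1)) •
            elt ((raw.getLast?).getD 1 * a0) raw.dropLast
  t_nil : ∀ a0 : D.A, t (elt a0 []) = elt a0 []
  t_mk : ∀ (n0 : ℤ) (a0 : D.A), a0 ∈ D.gr n0 →
    ∀ (raw : List D.A) (ds : List ℤ),
      List.Forall₂ (fun a k => a ∈ D.gr k ∧ aug a = 0) raw ds → raw ≠ [] →
      t (elt a0 raw) =
        ((-1 : ℚ) ^ ((((ds.getLast?).getD 0) - 1) * (eps n0 ds (raw.length - 1) + 1))) •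
          elt ((raw.getLast?).getD 1) (a0 :: raw.dropLast)
  sC_mk : ∀ (a0 : D.A) (raw : List D.A), sC (elt a0 raw) = elt 1 (a0 :: raw)
  Bo_mk : ∀ (a0 : D.A) (raw : List D.A),
    Bo (elt a0 raw) = ∑ k ∈ Finset.range (raw.length + 1), sC ((⇑t)^[k] (elt a0 raw))

attribute [instance] Hochschild.grp Hochschild.mod

/-- A `φ`-derivation `θ : A → A'` of degree `t` along a morphism of DGAs
`φ : A → A'`. -/
def IsDer₂ (D D' : GDGA) (φ : D.A →ₐ[ℚ] D'.A) (t : ℤ) (θ : D.A →ₗ[ℚ] D'.A) : Prop :=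
  (∀ n : ℤ, ∀ a ∈ D.gr n, θ a ∈ D'.gr (n + t)) ∧
  ∀ m : ℤ, ∀ a ∈ D.gr m, ∀ b,
    θ (a * b) = θ a * φ b + ((-1 : ℚ) ^ (t * m)) • (φ a * θ b)

/-- `F` is the Lie derivative operator `L_θ : C_*(A) → C_*(A')` of a
`φ`-derivation `θ` of degree `t`. -/
def IsLop (D D' : GDGA) (M : Hochschild D) (M' : Hochschild D') (φ : D.A →ₐ[ℚ] D'.A)
    (t : ℤ) (θ : D.A →ₗ[ℚ] D'.A) (F : M.C →ₗ[ℚ] M'.C) : Prop :=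
  ∀ (n0 : ℤ) (a0 : D.A), a0 ∈ D.gr n0 →
    ∀ (raw : List D.A) (ds : List ℤ),
      List.Forall₂ (fun a k => a ∈ D.gr k ∧ M.aug a = 0) raw ds →
      F (M.elt a0 raw) = M'.elt (θ a0) (raw.map ⇑φ)
        + ∑ i ∈ Finset.range raw.length,
            ((-1 : ℚ) ^ (t * (eps n0 ds i + 1))) •
              M'.elt (φ a0) ((raw.map ⇑φ).set i (θ (raw.getD i 0)))

/-- `F` is the contraction operator `e_θ : C_*(A) → C_*(A')` of a
`φ`-derivation `θ` of degree `t`. -/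
def IsEop (D D' : GDGA) (M : Hochschild D) (M' : Hochschild D') (φ : D.A →ₐ[ℚ] D'.A)
    (t : ℤ) (θ : D.A →ₗ[ℚ] D'.A) (F : M.C →ₗ[ℚ] M'.C) : Prop :=
  (∀ a0 : D.A, F (M.elt a0 []) = 0) ∧
  ∀ (n0 : ℤ) (a0 : D.A), a0 ∈ D.gr n0 →
    ∀ (raw : List D.A) (ds : List ℤ),
      List.Forall₂ (fun a k => a ∈ D.gr k ∧ M.aug a = 0) raw ds → raw ≠ [] →
      F (M.elt a0 raw) = ((-1 : ℚ) ^ (t * n0 + t + n0)) •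
        M'.elt (φ a0 * θ (raw.getD 0 0)) (raw.tail.map ⇑φ)

/-- `F` is the homotopy operator
`S_θ = ∑_{j=1}^n (∑_{k=0}^{n-j} s ∘ tᵏ) ∘ L_{θ,j} : C_*(A) → C_*(A')` of a
`φ`-derivation `θ` of degree `t`. -/
def IsSop (D D' : GDGA) (M : Hochschild D) (M' : Hochschild D') (φ : D.A →ₐ[ℚ] D'.A)
    (t : ℤ) (θ : D.A →ₗ[ℚ] D'.A) (F : M.C →ₗ[ℚ] M'.C) : Prop :=
  (∀ a0 : D.A, F (M.elt a0 []) = 0) ∧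
  ∀ (n0 : ℤ) (a0 : D.A), a0 ∈ D.gr n0 →
    ∀ (raw : List D.A) (ds : List ℤ),
      List.Forall₂ (fun a k => a ∈ D.gr k ∧ M.aug a = 0) raw ds →
      F (M.elt a0 raw) =
        ∑ j ∈ Finset.range raw.length, ∑ k ∈ Finset.range (raw.length - j),
          ((-1 : ℚ) ^ (t * (eps n0 ds j + 1))) •
            M'.sC ((⇑M'.t)^[k]
              (M'.elt (φ a0) ((raw.map ⇑φ).set j (θ (raw.getD j 0)))))


section Helpers

lemma pf_sign (a b : ℤ) (h : a % 2 = b % 2) : ((-1:ℚ))^a = ((-1:ℚ))^b := by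
  rcases Int.even_or_odd a with ha | ha
  · have hb : Even b := by rw [Int.even_iff] at ha ⊢; omega
    rw [ha.neg_one_zpow, hb.neg_one_zpow]
  · have hb : Odd b := by rw [Int.odd_iff] at ha ⊢; omega
    rw [ha.neg_one_zpow, hb.neg_one_zpow]

lemma pf_sign_mul (a b : ℤ) : ((-1:ℚ))^a * ((-1:ℚ))^b = ((-1:ℚ))^(a+b) :=
  (zpow_add₀ (by norm_num) a b).symm

lemma pf_one_zero (D : GDGA) (t : ℤ) (F : D.A →ₗ[ℚ] D.A) (hF : D.IsDer t F) :
    F 1 = 0 := by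
  have h := hF.2 0 1 D.one_mem 1
  simp only [mul_one, one_mul, mul_zero, zpow_zero, one_smul] at h
  have h2 : F 1 + 0 = F 1 + F 1 := by rw [add_zero]; exact h
  exact (add_left_cancel h2).symm

lemma pf_getD_map {α β : Type*} (f : α → β) (l : List α) (i : ℕ) (h : i < l.length)
    (d : α) (d' : β) : (l.map f).getD i d' = f (l.getD i d) := by
  rw [List.getD_eq_getElem _ _ (by simpa using h), List.getD_eq_getElem _ _ h,
    List.getElem_map]

lemma pf_prod_set_smul (D : GDGA) :
    ∀ (L : List D.A) (i : ℕ), i < L.length → ∀ (c : ℚ) (y : D.A),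
      (L.set i (c • y)).prod = c • (L.set i y).prod := by
  intro L
  induction L with
  | nil => intro i h; simp at h
  | cons a L ih =>
    intro i h c y
    cases i with
    | zero => simp [smul_mul_assoc]
    | succ i =>
      rw [List.set_cons_succ, List.set_cons_succ, List.prod_cons, List.prod_cons,
        ih i (by simpa using h) c y, mul_smul_comm]

lemma pf_forall2_map {α β α' β' : Type*} (f : α → α') (g : β → β')
    {R : α → β → Prop} {R' : α' → β' → Prop}
    (h : ∀ a b, R a b → R' (f a) (g b)) :
    ∀ {l : List α} {l' : List β}, List.Forall₂ R l l' →
      List.Forall₂ R' (l.map f) (l'.map g) := by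
  intro l l' h2
  induction h2 with
  | nil => simp
  | cons hab _ ih => exact List.Forall₂.cons (h _ _ hab) ih

lemma pf_LSphi (S : SullivanLoop) (t : ℤ) (θ : S.AV.A →ₗ[ℚ] S.AV.A)
    (hθ : S.AV.IsDer t θ) (LS : S.LL.A →ₗ[ℚ] S.LL.A) (hLS : S.IsLSul t θ LS) :
    ∀ a, LS (S.φ a) = S.φ (θ a) := by
  have aux : ∀ (x b : S.AV.A), LS (S.φ b) = S.φ (θ b) →
      LS (S.φ (x*b)) - S.φ (θ (x*b)) = (LS (S.φ x) - S.φ (θ x)) * S.φ b := by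
    intro x b hb
    have hx : x ∈ ⨆ n, S.AV.gr n := by rw [S.AV.gr_top]; trivial
    refine Submodule.iSup_induction (motive := fun x => LS (S.φ (x*b)) - S.φ (θ (x*b))
      = (LS (S.φ x) - S.φ (θ x)) * S.φ b) _ hx ?_ ?_ ?_
    · intro m x hxm
      have h1 := hθ.2 m x hxm b
      have h2 := hLS.1.2 m (S.φ x) (S.φ_gr m x hxm) (S.φ b)
      rw [map_mul, h2, h1, map_add, map_smul, map_mul, map_mul, hb, sub_mul]
      abel
    · simp
    · intro u v hu hv
      simp only [add_mul, map_add]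
      rw [add_sub_add_comm, hu, hv, ← add_mul, ← add_sub_add_comm]
  intro a
  have ha : a ∈ Algebra.adjoin ℚ (S.V : Set S.AV.A) := by rw [S.V_gen]; trivial
  induction ha using Algebra.adjoin_induction with
  | mem v hv => exact hLS.2.1 v hv
  | algebraMap r =>
    simp [Algebra.algebraMap_eq_smul_one, pf_one_zero S.AV t θ hθ,
      pf_one_zero S.LL t LS hLS.1]
  | add x y _ _ hx hy => simp [map_add, hx, hy]
  | mul x y _ _ hx hy =>
    have h := aux x y hy
    rw [hx, sub_self, zero_mul, sub_eq_zero] at h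
    exact h

end Helpers

lemma pf_LSs (S : SullivanLoop) (t : ℤ) (θ : S.AV.A →ₗ[ℚ] S.AV.A)
    (hθ : S.AV.IsDer t θ) (LS : S.LL.A →ₗ[ℚ] S.LL.A) (hLS : S.IsLSul t θ LS) :
    ∀ x, LS (S.s x) = ((-1:ℚ)^t) • S.s (LS x) := by
  have aux : ∀ (x y : S.LL.A), LS (S.s y) = ((-1:ℚ)^t) • S.s (LS y) →
      LS (S.s (x*y)) - ((-1:ℚ)^t) • S.s (LS (x*y))
        = (LS (S.s x) - ((-1:ℚ)^t) • S.s (LS x)) * y := by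
    intro x y hy
    have hx : x ∈ ⨆ n, S.LL.gr n := by rw [S.LL.gr_top]; trivial
    refine Submodule.iSup_induction (motive := fun x => LS (S.s (x*y)) - ((-1:ℚ)^t) • S.s (LS (x*y))
      = (LS (S.s x) - ((-1:ℚ)^t) • S.s (LS x)) * y) _ hx ?_ ?_ ?_
    · intro m x hxm
      have hsx := S.s_der.1 m x hxm
      have hLx := hLS.1.1 m x hxm
      have e1 : ((-1:ℚ))^(t*(m + -1)) = ((-1:ℚ))^t * ((-1:ℚ))^(t*m) := by
        rw [pf_sign_mul]; apply pf_sign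
        have h : t*(m + -1) = t*m - t := by ring
        rw [h]; generalize t * m = k; omega
      have e2 : ((-1:ℚ))^((-1)*m) = ((-1:ℚ))^t * ((-1:ℚ))^((-1)*(m+t)) := by
        rw [pf_sign_mul]; apply pf_sign
        have h : (-1)*m = t + (-1)*(m+t) := by ring
        rw [h]
      rw [S.s_der.2 m x hxm y, map_add, map_smul,
        hLS.1.2 (m + -1) (S.s x) hsx y, hLS.1.2 m x hxm (S.s y),
        hLS.1.2 m x hxm y, map_add, map_smul,
        S.s_der.2 (m+t) (LS x) hLx y, S.s_der.2 m x hxm (LS y), hy, e1, e2, sub_mul]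
      simp only [smul_add, smul_smul, smul_mul_assoc, mul_smul_comm]
      module
    · simp
    · intro u v hu hv
      simp only [add_mul, map_add, smul_add]
      rw [add_sub_add_comm, hu, hv, ← add_mul, ← add_sub_add_comm]
  intro x
  have hx : x ∈ Algebra.adjoin ℚ
      ((⇑S.φ '' (S.V : Set S.AV.A)) ∪ ((fun v => S.s (S.φ v)) '' (S.V : Set S.AV.A))) := by
    rw [S.gen]; trivial
  induction hx using Algebra.adjoin_induction with
  | mem z hz =>
    rcases hz with ⟨v, hv, rfl⟩ | ⟨v, hv, rfl⟩
    · rw [hLS.2.2 v hv, hLS.2.1 v hv]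
    · rw [S.s_sq, map_zero, hLS.2.2 v hv, map_smul, S.s_sq, smul_zero, smul_zero]
  | algebraMap r =>
    have hs1 : S.s 1 = 0 := pf_one_zero S.LL (-1) S.s S.s_der
    have hL1 : LS 1 = 0 := pf_one_zero S.LL t LS hLS.1
    simp [Algebra.algebraMap_eq_smul_one, hs1, hL1]
  | add x y _ _ hx hy => simp [map_add, hx, hy, smul_add]
  | mul x y _ _ hx hy =>
    have h := aux x y hy
    rw [hx, sub_self, zero_mul, sub_eq_zero] at h
    exact h

lemma pf_LSsphi (S : SullivanLoop) (t : ℤ) (θ : S.AV.A →ₗ[ℚ] S.AV.A)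
    (hθ : S.AV.IsDer t θ) (LS : S.LL.A →ₗ[ℚ] S.LL.A) (hLS : S.IsLSul t θ LS) :
    ∀ a, LS (S.s (S.φ a)) = ((-1:ℚ)^t) • S.s (S.φ (θ a)) := by
  intro a
  rw [pf_LSs S t θ hθ LS hLS, pf_LSphi S t θ hθ LS hLS]

lemma pf_listLeib (D : GDGA) (t : ℤ) (F : D.A →ₗ[ℚ] D.A) (hF : D.IsDer t F) :
    ∀ {L : List D.A} {ms : List ℤ}, List.Forall₂ (fun x m => x ∈ D.gr m) L ms →
    ∀ (m0 : ℤ) (x0 : D.A), x0 ∈ D.gr m0 →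
    F (x0 * L.prod) = F x0 * L.prod
      + ∑ i ∈ Finset.range L.length,
          ((-1:ℚ) ^ (t * (m0 + ((ms.take i).sum)))) •
            (x0 * (L.set i (F (L.getD i 0))).prod) := by
  intro L ms h
  induction h with
  | nil => intro m0 x0 _; simp
  | @cons x m L' ms' hxm hL ih =>
    intro m0 x0 h0
    have key := ih (m0 + m) (x0 * x) (D.mul_mem h0 hxm)
    have leib := hF.2 m0 x0 h0 x
    rw [List.prod_cons, ← mul_assoc, key, leib]
    rw [List.length_cons, Finset.sum_range_succ']
    have hsum : ∀ i ∈ Finset.range L'.length,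
        ((-1:ℚ) ^ (t * ((m0 + m) + ((ms'.take i).sum)))) •
            ((x0 * x) * (L'.set i (F (L'.getD i 0))).prod)
        = ((-1:ℚ) ^ (t * (m0 + (((m :: ms').take (i+1)).sum)))) •
            (x0 * ((x :: L').set (i+1) (F ((x :: L').getD (i+1) 0))).prod) := by
      intro i _
      rw [List.set_cons_succ, List.getD_cons_succ, List.take_succ_cons, List.sum_cons,
        List.prod_cons, mul_assoc,
        show t * ((m0 + m) + ((ms'.take i).sum)) = t * (m0 + (m + (ms'.take i).sum)) by ring]
    rw [Finset.sum_congr rfl hsum]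
    simp only [List.set_cons_zero, List.getD_cons_zero, List.take_zero, List.sum_nil,
      add_zero, List.prod_cons]
    rw [add_mul, smul_mul_assoc]
    simp only [mul_assoc]
    abel



/-- Let `(∧V, d)` be a Sullivan algebra with `V¹ = 0` and
`θ ∈ Der(∧V)`.  Then `Θ ∘ L_θ = L_θ ∘ Θ : C_*(∧V) → 𝓛`, where on the left `L_θ`
is the Hochschild Lie derivative, on the right the Sullivan-model derivation of
`𝓛`, and `Θ (a₀[a₁|⋯|aₙ]) = (1/n!) a₀ (s a₁) ⋯ (s aₙ)`. -/
theorem theta_intertwines_L (S : SullivanLoop)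
    (hV1 : S.V ⊓ S.AV.gr 1 = ⊥)
    (M : Hochschild S.AV)
    (t : ℤ) (θ : S.AV.A →ₗ[ℚ] S.AV.A) (hθ : S.AV.IsDer t θ)
    (LH : M.C →ₗ[ℚ] M.C)
    (hLH : IsLop S.AV S.AV M M (AlgHom.id ℚ S.AV.A) t θ LH)
    (LS : S.LL.A →ₗ[ℚ] S.LL.A) (hLS : S.IsLSul t θ LS)
    (Θ : M.C →ₗ[ℚ] S.LL.A)
    (hΘ : ∀ (a0 : S.AV.A) (raw : List S.AV.A),
      Θ (M.elt a0 raw)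
        = ((raw.length.factorial : ℚ))⁻¹ •
            (S.φ a0 * (raw.map (fun a => S.s (S.φ a))).prod)) :
    Θ ∘ₗ LH = LS ∘ₗ Θ := by
  have hphi := pf_LSphi S t θ hθ LS hLS
  have hsphi := pf_LSsphi S t θ hθ LS hLS
  suffices hset : {y : M.C | ∃ (n0 : ℤ) (a0 : S.AV.A) (raw : List S.AV.A) (ds : List ℤ),
      a0 ∈ S.AV.gr n0 ∧ List.Forall₂ (fun a k => a ∈ S.AV.gr k ∧ M.aug a = 0) raw ds ∧
      y = M.elt a0 raw} ⊆ ↑(LinearMap.ker (Θ ∘ₗ LH - LS ∘ₗ Θ)) by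
    apply LinearMap.ext; intro x
    have h := Submodule.span_le.mpr hset (M.spanning x)
    simpa [LinearMap.mem_ker, LinearMap.sub_apply, sub_eq_zero] using h
  rintro y ⟨n0, a0, raw, ds, h0, hF2, rfl⟩
  simp only [SetLike.mem_coe, LinearMap.mem_ker, LinearMap.sub_apply,
    LinearMap.comp_apply, sub_eq_zero]
  have hms : List.Forall₂ (fun x m => x ∈ S.LL.gr m)
      (raw.map (fun a => S.s (S.φ a))) (ds.map (fun n => n - 1)) := by
    refine pf_forall2_map _ _ ?_ hF2
    intro a k hk
    have h := S.s_der.1 k (S.φ a) (S.φ_gr k a hk.1)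
    rw [sub_eq_add_neg]
    exact h
  have key := pf_listLeib S.LL t LS hLS.1 hms n0 (S.φ a0) (S.φ_gr n0 a0 h0)
  rw [hLH n0 a0 h0 raw ds hF2]
  simp only [AlgHom.coe_id, List.map_id, id_eq]
  rw [map_add, map_sum]
  simp only [map_smul, hΘ, List.length_set, List.map_set]
  rw [key, hphi, smul_add, Finset.smul_sum]
  simp only [List.length_map]
  congr 1
  refine Finset.sum_congr rfl ?_
  intro i hi
  have hi' : i < raw.length := Finset.mem_range.mp hi
  rw [pf_getD_map (fun a => S.s (S.φ a)) raw i hi' 0 0, hsphi,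
    pf_prod_set_smul S.LL _ i (by simpa using hi'), mul_smul_comm,
    smul_smul, smul_smul, smul_smul]
  congr 1
  rw [mul_assoc, pf_sign_mul]
  have hE : t * (eps n0 ds i + 1)
      = t * (n0 + ((ds.map (fun n => n - 1)).take i).sum) + t := by
    show t * ((n0 + ((ds.take i).map (fun n => n - 1)).sum) + 1) = _
    rw [List.map_take]; ring
  rw [hE, mul_comm]
end

section
/- Let (∧(x, y), d) be the free graded-commutative algebra over ℚ on generators x of degree 2 and y of degree 5, with dx = 0 and dy = x³ (the minimal Sullivan model of ℂP²). Then: (1) the homology of the complex of negative-degree derivations of (∧(x, y), d) (with differential [d, −]) is two-dimensional, spanned by the classes of the derivations (y, 1) and (y, x) (which send y to 1 and to x respectively, and x to 0), in degrees −5 and −3; and (2) every derivation of negative degree of the graded algebra ℚ[x]/(x³) (with x of degree 2) is zero. In particular, the quasi-isomorphism (∧(x, y), d) → ℚ[x]/(x³) sending x to x and y to 0 does not induce an isomorphism between the homologies of the derivation complexes. -/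
open Polynomial TrivSqZeroExt

/-- The free graded-commutative algebra `∧(x, y)` with `deg x = 2`, `deg y = 5`
(so `y² = 0` and `y` is central), realized as the dual numbers over `ℚ[X]`:
an element `(a, b)` represents `a(x) + b(x)·y`. -/
noncomputable abbrev A18 : Type := DualNumber (Polynomial ℚ)

/-- The generator `x` (degree `2`). -/
noncomputable def xg : A18 := inl Polynomial.X

/-- The generator `y` (degree `5`). -/
noncomputable def yg : A18 := inr 1

/-- The grading of `∧(x, y)`: degree `2k` part spanned by `xᵏ`, degree `2k + 5`
part spanned by `xᵏ y`. -/
noncomputable def gr18 (n : ℤ) : Submodule ℚ A18 :=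
  Submodule.span ℚ
    {a : A18 | (∃ k : ℕ, n = 2 * k ∧ a = inl (Polynomial.X ^ k)) ∨
      (∃ k : ℕ, n = 2 * k + 5 ∧ a = inr (Polynomial.X ^ k))}

/-- The differential with `d x = 0`, `d y = x³` (the minimal Sullivan model of
`ℂP²`): `d (a + b y) = b x³`. -/
noncomputable def d18 : A18 →ₗ[ℚ] A18 where
  toFun a := inl (snd a * Polynomial.X ^ 3)
  map_add' a b := by simp [add_mul]
  map_smul' c a := by simp [smul_mul_assoc]

/-- A derivation of the graded algebra `∧(x, y)` of degree `k`. -/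
def IsDer18 (k : ℤ) (θ : A18 →ₗ[ℚ] A18) : Prop :=
  (∀ n : ℤ, ∀ a ∈ gr18 n, θ a ∈ gr18 (n + k)) ∧
  ∀ m : ℤ, ∀ a ∈ gr18 m, ∀ b, θ (a * b) = θ a * b + ((-1 : ℚ) ^ (k * m)) • (a * θ b)

/-- A coboundary in the complex `(Der(∧(x, y)), [d, -])` of degree `k`. -/
def Bdry18 (k : ℤ) (θ : A18 →ₗ[ℚ] A18) : Prop :=
  ∃ η, IsDer18 (k - 1) η ∧ θ = d18 ∘ₗ η - ((-1 : ℚ) ^ (k - 1)) • (η ∘ₗ d18)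

/-- The derivation `(y, 1)`: `y ↦ 1`, `x ↦ 0` (degree `-5`). -/
noncomputable def th1 : A18 →ₗ[ℚ] A18 where
  toFun a := inl (snd a)
  map_add' a b := by simp
  map_smul' c a := by simp

/-- The derivation `(y, x)`: `y ↦ x`, `x ↦ 0` (degree `-3`). -/
noncomputable def th2 : A18 →ₗ[ℚ] A18 where
  toFun a := inl (Polynomial.X * snd a)
  map_add' a b := by simp [mul_add]
  map_smul' c a := by simp [mul_smul_comm]

/-- The graded algebra `ℚ[x]/(x³)` (with `x` of degree `2` and zero
differential): the rational cohomology of `ℂP²`. -/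
noncomputable abbrev B18 : Type :=
  Polynomial ℚ ⧸ (Ideal.span {(Polynomial.X : Polynomial ℚ) ^ 3})

/-- The grading of `ℚ[x]/(x³)`. -/
noncomputable def grB (n : ℤ) : Submodule ℚ B18 :=
  Submodule.span ℚ
    {b : B18 | ∃ k : ℕ, n = 2 * k ∧
      b = Ideal.Quotient.mk (Ideal.span {(Polynomial.X : Polynomial ℚ) ^ 3})
            (Polynomial.X ^ k)}

/-- A derivation of the graded algebra `ℚ[x]/(x³)` of degree `k`. -/
def IsDerB (k : ℤ) (θ : B18 →ₗ[ℚ] B18) : Prop :=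
  (∀ n : ℤ, ∀ b ∈ grB n, θ b ∈ grB (n + k)) ∧
  ∀ m : ℤ, ∀ a ∈ grB m, ∀ b, θ (a * b) = θ a * b + ((-1 : ℚ) ^ (k * m)) • (a * θ b)
-- ===== helper lemmas =====
section Helpers
open Polynomial

local notation "R" => Polynomial ℚ

lemma sgn_even (k j : ℤ) : (-1:ℚ) ^ (k * (2*j)) = 1 := by
  rw [show k*(2*j) = 2*(k*j) by ring, zpow_mul]
  norm_num

lemma sgn_odd_odd (k j : ℤ) (hk : Odd k) : (-1:ℚ) ^ (k * (2*j+5)) = -1 := by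
  obtain ⟨t, ht⟩ := hk
  rw [show k*(2*j+5) = 2*(k*j+2*k+t)+1 by rw [ht]; ring,
    zpow_add₀ (by norm_num : (-1:ℚ) ≠ 0), zpow_mul]
  norm_num

lemma mem_gr_x (k : ℕ) : (inl (X^k) : A18) ∈ gr18 (2*k) :=
  Submodule.subset_span (Or.inl ⟨k, rfl, rfl⟩)

lemma mem_gr_y (k : ℕ) : (inr (X^k) : A18) ∈ gr18 (2*k+5) :=
  Submodule.subset_span (Or.inr ⟨k, rfl, rfl⟩)

lemma xg_mem : xg ∈ gr18 2 := by
  have := mem_gr_x 1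
  simpa [xg] using this

lemma yg_mem : yg ∈ gr18 5 := by
  have := mem_gr_y 0
  simpa [yg] using this

lemma gr_bot {n : ℤ} (h : n < 0 ∨ n = 1 ∨ n = 3) : gr18 n = ⊥ := by
  rw [gr18, show {a : A18 | (∃ k : ℕ, n = 2 * k ∧ a = inl (Polynomial.X ^ k)) ∨
      (∃ k : ℕ, n = 2 * k + 5 ∧ a = inr (Polynomial.X ^ k))} = ∅ from ?_,
    Submodule.span_empty]
  rw [Set.eq_empty_iff_forall_notMem]
  rintro a (⟨k, hk, -⟩ | ⟨k, hk, -⟩) <;> omega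

lemma gr_eq_single (j : ℕ) : gr18 (2*j) = Submodule.span ℚ {(inl (X^j) : A18)} := by
  rw [gr18]
  congr 1
  ext a
  constructor
  · rintro (⟨k, hk, rfl⟩ | ⟨k, hk, -⟩)
    · have : k = j := by omega
      subst this; rfl
    · omega
  · rintro rfl
    exact Or.inl ⟨j, rfl, rfl⟩

end Helpers
section Helpers2
open Polynomial

/-- The Leibniz rule part of `IsDer18`. -/
def Leib (k : ℤ) (θ : A18 →ₗ[ℚ] A18) : Prop :=
  ∀ m : ℤ, ∀ a ∈ gr18 m, ∀ b, θ (a * b) = θ a * b + ((-1 : ℚ) ^ (k * m)) • (a * θ b)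

lemma leib_sub_smul {k : ℤ} {θ θ' : A18 →ₗ[ℚ] A18} (h : Leib k θ) (h' : Leib k θ')
    (c : ℚ) : Leib k (θ - c • θ') := by
  intro m a ha b
  simp only [LinearMap.sub_apply, LinearMap.smul_apply, h m a ha b, h' m a ha b,
    smul_sub, mul_sub, sub_mul, smul_smul, mul_smul_comm, smul_mul_assoc]
  module

lemma theta_one_eq_zero {k : ℤ} {θ : A18 →ₗ[ℚ] A18} (hL : Leib k θ) : θ 1 = 0 := by
  have h1 : (1 : A18) ∈ gr18 0 := by
    have := mem_gr_x 0
    simpa using this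
  have := hL 0 1 h1 1
  simp only [mul_zero, zpow_zero, one_smul, one_mul, mul_one] at this
  exact left_eq_add.mp this

lemma der_zero {k : ℤ} {θ : A18 →ₗ[ℚ] A18} (hL : Leib k θ)
    (hx : θ xg = 0) (hy : θ yg = 0) : θ = 0 := by
  have h1 : θ 1 = 0 := theta_one_eq_zero hL
  have hxn : ∀ n : ℕ, θ (inl (X^n)) = 0 := by
    intro n
    induction n with
    | zero => simpa using h1
    | succ n ih =>
      have hmul : (inl (X^(n+1)) : A18) = xg * inl (X^n) := by
        rw [xg, inl_mul_inl, pow_succ, mul_comm]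
      rw [hmul, hL 2 xg xg_mem (inl (X^n)), hx, ih]
      simp
  have hyn : ∀ n : ℕ, θ (inr (X^n)) = 0 := by
    intro n
    have hmul : (inr (X^n) : A18) = inl (X^n) * yg := by
      apply TrivSqZeroExt.ext <;> simp [yg]
    rw [hmul, hL (2*n) _ (mem_gr_x n) yg, hxn n, hy]
    simp
  apply LinearMap.ext; intro a
  have ha : a = inl (fst a) + inr (snd a) := (inl_fst_add_inr_snd_eq a).symm
  have hil : ∀ p : Polynomial ℚ, θ (inl p) = 0 := by
    intro p
    induction p using Polynomial.induction_on' with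
    | add p q hp hq => rw [inl_add, map_add, hp, hq, add_zero]
    | monomial n c =>
      rw [← smul_X_eq_monomial, inl_smul, map_smul, hxn n, smul_zero]
  have hir : ∀ p : Polynomial ℚ, θ (inr p) = 0 := by
    intro p
    induction p using Polynomial.induction_on' with
    | add p q hp hq => rw [inr_add, map_add, hp, hq, add_zero]
    | monomial n c =>
      rw [← smul_X_eq_monomial, inr_smul, map_smul, hyn n, smul_zero]
  rw [ha, map_add, hil, hir, add_zero, LinearMap.zero_apply]

end Helpers2
section Helpers3
open Polynomial

lemma der_eq {k : ℤ} {θ θ' : A18 →ₗ[ℚ] A18} (hL : Leib k θ) (hL' : Leib k θ')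
    (hx : θ xg = θ' xg) (hy : θ yg = θ' yg) : θ = θ' := by
  have h := leib_sub_smul hL hL' 1
  rw [one_smul] at h
  have := der_zero h (by simp [hx]) (by simp [hy])
  exact sub_eq_zero.mp this

lemma leib_snd (r : Polynomial ℚ) (k : ℤ) (hk : Odd k) (θ : A18 →ₗ[ℚ] A18)
    (hθ : ∀ a, θ a = inl (r * snd a)) : Leib k θ := by
  intro m a ha b
  induction ha using Submodule.span_induction with
  | mem a' h =>
    obtain (⟨j, hm, rfl⟩ | ⟨j, hm, rfl⟩) := h
    · subst hm
      rw [sgn_even]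
      apply TrivSqZeroExt.ext <;>
        simp [hθ, fst_mul, snd_mul, smul_eq_mul, op_smul_eq_mul] <;> ring
    · subst hm
      rw [sgn_odd_odd _ _ hk]
      apply TrivSqZeroExt.ext <;>
        simp [hθ, fst_mul, snd_mul, smul_eq_mul, op_smul_eq_mul] <;> ring
  | zero => simp [hθ]
  | add x y hx hy hx' hy' =>
    simp only [add_mul, map_add, hx', hy', smul_add, mul_add]
    abel
  | smul c x hx ih =>
    simp only [smul_mul_assoc, map_smul, ih, smul_add, mul_smul_comm]
    rw [smul_comm]
end Helpers3
section Helpers4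
open Polynomial

lemma grad_of (θ : A18 →ₗ[ℚ] A18) (k : ℤ)
    (hx : ∀ j : ℕ, θ (inl (X^j)) ∈ gr18 (2*j + k))
    (hy : ∀ j : ℕ, θ (inr (X^j)) ∈ gr18 (2*j + 5 + k)) :
    ∀ n : ℤ, ∀ a ∈ gr18 n, θ a ∈ gr18 (n + k) := by
  intro n a ha
  induction ha using Submodule.span_induction with
  | mem a' h =>
    obtain (⟨j, hm, rfl⟩ | ⟨j, hm, rfl⟩) := h
    · subst hm; exact hx j
    · subst hm; exact hy j
  | zero => simp
  | add x y _ _ hx' hy' => rw [map_add]; exact add_mem hx' hy'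
  | smul c x _ ih => rw [map_smul]; exact Submodule.smul_mem _ c ih

lemma th1_apply (a : A18) : th1 a = inl (snd a) := rfl
lemma th2_apply (a : A18) : th2 a = inl (X * snd a) := rfl
lemma d18_apply (a : A18) : d18 a = inl (snd a * X^3) := rfl

lemma th1_xg : th1 xg = 0 := by
  apply TrivSqZeroExt.ext <;> simp [th1_apply, xg]

lemma th1_yg : th1 yg = inl 1 := by
  apply TrivSqZeroExt.ext <;> simp [th1_apply, yg]

lemma th2_xg : th2 xg = 0 := by
  apply TrivSqZeroExt.ext <;> simp [th2_apply, xg]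

lemma th2_yg : th2 yg = inl X := by
  apply TrivSqZeroExt.ext <;> simp [th2_apply, yg]

lemma th1_leib : Leib (-5) th1 :=
  leib_snd 1 (-5) ⟨-3, by norm_num⟩ th1 (fun a => by rw [one_mul]; rfl)

lemma th2_leib : Leib (-3) th2 :=
  leib_snd X (-3) ⟨-2, by norm_num⟩ th2 (fun a => rfl)

lemma th1_der : IsDer18 (-5) th1 := by
  constructor
  · apply grad_of
    · intro j
      have : th1 (inl (X^j) : A18) = 0 := by
        apply TrivSqZeroExt.ext <;> simp [th1_apply]
      rw [this]; exact zero_mem _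
    · intro j
      have : th1 (inr (X^j) : A18) = inl (X^j) := by
        apply TrivSqZeroExt.ext <;> simp [th1_apply]
      rw [this, show (2*(j:ℤ)+5+(-5)) = 2*j by ring]
      exact mem_gr_x j
  · exact th1_leib

lemma th2_der : IsDer18 (-3) th2 := by
  constructor
  · apply grad_of
    · intro j
      have : th2 (inl (X^j) : A18) = 0 := by
        apply TrivSqZeroExt.ext <;> simp [th2_apply]
      rw [this]; exact zero_mem _
    · intro j
      have : th2 (inr (X^j) : A18) = inl (X^(j+1)) := by
        apply TrivSqZeroExt.ext <;> simp [th2_apply, pow_succ, mul_comm]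
      rw [this, show (2*(j:ℤ)+5+(-3)) = 2*(j+1:ℕ) by push_cast; ring]
      exact mem_gr_x (j+1)
  · exact th2_leib

lemma th1_cocycle : d18 ∘ₗ th1 - ((-1 : ℚ) ^ (-5 : ℤ)) • (th1 ∘ₗ d18) = 0 := by
  apply LinearMap.ext; intro a
  have e1 : d18 (th1 a) = 0 := by apply TrivSqZeroExt.ext <;> simp [d18_apply, th1_apply]
  have e2 : th1 (d18 a) = 0 := by apply TrivSqZeroExt.ext <;> simp [d18_apply, th1_apply]
  simp [e1, e2]

lemma th2_cocycle : d18 ∘ₗ th2 - ((-1 : ℚ) ^ (-3 : ℤ)) • (th2 ∘ₗ d18) = 0 := by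
  apply LinearMap.ext; intro a
  have e1 : d18 (th2 a) = 0 := by apply TrivSqZeroExt.ext <;> simp [d18_apply, th2_apply]
  have e2 : th2 (d18 a) = 0 := by apply TrivSqZeroExt.ext <;> simp [d18_apply, th2_apply]
  simp [e1, e2]

end Helpers4
section Helpers5
open Polynomial

noncomputable def phiMap (r : Polynomial ℚ) : A18 →ₗ[ℚ] A18 where
  toFun a := inl (r * snd a)
  map_add' a b := by simp [mul_add]
  map_smul' c a := by simp [mul_smul_comm]

lemma phiMap_apply (r : Polynomial ℚ) (a : A18) : phiMap r a = inl (r * snd a) := rfl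

noncomputable def Dmap : A18 →ₗ[ℚ] A18 where
  toFun a := inl (derivative (fst a)) + inr (derivative (snd a))
  map_add' a b := by
    simp only [fst_add, snd_add, map_add, inl_add, inr_add]
    abel
  map_smul' c a := by
    simp [fst_smul, snd_smul, inl_smul, inr_smul, smul_add]

lemma Dmap_apply (a : A18) :
    Dmap a = inl (derivative (fst a)) + inr (derivative (snd a)) := rfl

lemma Dmap_inl (p : Polynomial ℚ) : Dmap (inl p) = inl (derivative p) := by
  apply TrivSqZeroExt.ext <;> simp [Dmap_apply]

lemma Dmap_inr (p : Polynomial ℚ) : Dmap (inr p) = inr (derivative p) := by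
  apply TrivSqZeroExt.ext <;> simp [Dmap_apply]

lemma Dmap_grad : ∀ n : ℤ, ∀ a ∈ gr18 n, Dmap a ∈ gr18 (n + (-2)) := by
  apply grad_of
  · intro j
    rw [Dmap_inl, derivative_X_pow]
    cases j with
    | zero => simp
    | succ j' =>
      have h : (inl (C ((j'+1 : ℕ) : ℚ) * X ^ (j'+1-1)) : A18)
          = ((j'+1 : ℕ) : ℚ) • inl (X^j') := by
        apply TrivSqZeroExt.ext <;> simp [smul_eq_C_mul]
      rw [h, show (2*((j'+1:ℕ):ℤ) + (-2)) = 2*(j':ℤ) by push_cast; ring]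
      exact Submodule.smul_mem _ _ (mem_gr_x j')
  · intro j
    rw [Dmap_inr, derivative_X_pow]
    cases j with
    | zero => simp
    | succ j' =>
      have h : (inr (C ((j'+1 : ℕ) : ℚ) * X ^ (j'+1-1)) : A18)
          = ((j'+1 : ℕ) : ℚ) • inr (X^j') := by
        apply TrivSqZeroExt.ext <;> simp [smul_eq_C_mul]
      rw [h, show (2*((j'+1:ℕ):ℤ) + 5 + (-2)) = 2*(j':ℤ)+5 by push_cast; ring]
      exact Submodule.smul_mem _ _ (mem_gr_y j')

lemma Dmap_mul (a b : A18) : Dmap (a * b) = Dmap a * b + a * Dmap b := by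
  apply TrivSqZeroExt.ext <;>
    simp [Dmap_apply, fst_mul, snd_mul, op_smul_eq_mul, smul_eq_mul, derivative_mul] <;> ring

lemma sgn_neg_two (m : ℤ) : (-1:ℚ) ^ ((-2) * m) = 1 := by
  rw [show (-2)*m = 2*(-m) by ring, zpow_mul]; norm_num

lemma Dmap_smul_der (c : ℚ) : IsDer18 (-2) (c • Dmap) := by
  constructor
  · intro n a ha
    rw [LinearMap.smul_apply]
    exact Submodule.smul_mem _ _ (Dmap_grad n a ha)
  · intro m a _ b
    rw [sgn_neg_two, one_smul]
    simp only [LinearMap.smul_apply, Dmap_mul, smul_add, smul_mul_assoc, mul_smul_comm]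

lemma Dmap_comm (c : ℚ) :
    d18 ∘ₗ (c • Dmap) - (c • Dmap) ∘ₗ d18 = phiMap ((-3*c) • X^2) := by
  apply LinearMap.ext; intro a
  apply TrivSqZeroExt.ext <;>
    simp [d18_apply, Dmap_apply, phiMap_apply, derivative_mul, derivative_X_pow,
      smul_eq_C_mul, map_ofNat] <;> ring

end Helpers5
section Helpers6
open Polynomial

lemma sgn_k2 (k : ℤ) : (-1:ℚ) ^ (k*2) = 1 := by
  rw [show k*2 = 2*k by ring, zpow_mul]; norm_num

lemma inl_ne {p : Polynomial ℚ} (hp : p ≠ 0) : (inl p : A18) ≠ 0 :=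
  fun h => hp (by simpa using congrArg fst h)

lemma xg_mul_xg : xg * xg = inl (X^2) := by
  rw [xg, inl_mul_inl, sq]

lemma xg_cube : xg * (xg * xg) = inl (X^3) := by
  rw [xg_mul_xg, xg, inl_mul_inl]
  congr 1
  ring

lemma d18_yg : d18 yg = inl (X^3) := by
  apply TrivSqZeroExt.ext <;> simp [d18_apply, yg]

lemma eta_x3 {k : ℤ} {η : A18 →ₗ[ℚ] A18} (hLe : Leib k η) (hx : η xg = 0) :
    η (inl (X^3)) = 0 := by
  have e1 : η (xg * xg) = 0 := by
    rw [hLe 2 xg xg_mem, hx]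
    simp
  rw [← xg_cube, hLe 2 xg xg_mem, hx, e1]
  simp

lemma not_bdry_th1 : ¬ Bdry18 (-5) th1 := by
  rintro ⟨η, ⟨hg, hLe⟩, heq⟩
  have hx : η xg = 0 := by
    have := hg 2 xg xg_mem
    rw [gr_bot (Or.inl (by norm_num))] at this
    simpa using this
  have hy : η yg = 0 := by
    have := hg 5 yg yg_mem
    rw [gr_bot (Or.inl (by norm_num))] at this
    simpa using this
  have := LinearMap.congr_fun heq yg
  rw [th1_yg] at this
  simp only [LinearMap.sub_apply, LinearMap.comp_apply, LinearMap.smul_apply, hy,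
    map_zero, d18_yg, eta_x3 hLe hx, smul_zero, sub_zero] at this
  exact inl_ne one_ne_zero this

lemma not_bdry_th2 : ¬ Bdry18 (-3) th2 := by
  rintro ⟨η, ⟨hg, hLe⟩, heq⟩
  have hx : η xg = 0 := by
    have := hg 2 xg xg_mem
    rw [gr_bot (Or.inl (by norm_num))] at this
    simpa using this
  have hy : η yg = 0 := by
    have := hg 5 yg yg_mem
    rw [gr_bot (Or.inr (Or.inl (by norm_num)))] at this
    simpa using this
  have := LinearMap.congr_fun heq yg
  rw [th2_yg] at this
  simp only [LinearMap.sub_apply, LinearMap.comp_apply, LinearMap.smul_apply, hy,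
    map_zero, d18_yg, eta_x3 hLe hx, smul_zero, sub_zero] at this
  exact inl_ne X_ne_zero this

lemma zero_der (k : ℤ) : IsDer18 k 0 := by
  constructor
  · intro n a _; simp
  · intro m a _ b; simp

lemma leib_smul {k : ℤ} {θ : A18 →ₗ[ℚ] A18} (h : Leib k θ) (c : ℚ) :
    Leib k (c • θ) := by
  have h0 : Leib k (0 : A18 →ₗ[ℚ] A18) := (zero_der k).2
  have h2 := leib_sub_smul h0 h (-c)
  have h3 : (0 : A18 →ₗ[ℚ] A18) - (-c) • θ = c • θ := by
    apply LinearMap.ext; intro a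
    simp
  rwa [h3] at h2
end Helpers6
section H6b
open Polynomial

lemma smul_inl_one (c : ℚ) : c • (inl 1 : A18) = inl (C c) := by
  rw [← inl_smul]
  congr 1
  rw [smul_eq_C_mul, mul_one]

lemma phiMap_xg (r : Polynomial ℚ) : phiMap r xg = 0 := by
  rw [phiMap_apply, xg, snd_inl, mul_zero, inl_zero]

lemma phiMap_yg (r : Polynomial ℚ) : phiMap r yg = inl r := by
  rw [phiMap_apply, yg, snd_inr, mul_one]

lemma theta_x3 {k : ℤ} {θ : A18 →ₗ[ℚ] A18} (hLe : Leib k θ) {c : ℚ}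
    (hx : θ xg = inl (C c)) : θ (inl (X^3)) = inl (C c * (3*X^2)) := by
  have s2 : ((-1:ℚ) ^ (k*2)) = 1 := sgn_k2 k
  have e1 : θ (xg * xg) = inl (C c * (2*X)) := by
    rw [hLe 2 xg xg_mem, hx, s2, one_smul, xg, inl_mul_inl, inl_mul_inl, ← inl_add]
    congr 1
    ring
  rw [← xg_cube, hLe 2 xg xg_mem, hx, s2, one_smul, e1, xg_mul_xg, xg,
    inl_mul_inl, inl_mul_inl, ← inl_add]
  congr 1
  ring
end H6b
section Helpers7
open Polynomial

lemma bdry_zero_map (s : ℚ) :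
    d18 ∘ₗ (0 : A18 →ₗ[ℚ] A18) - s • ((0 : A18 →ₗ[ℚ] A18) ∘ₗ d18) = 0 := by
  apply LinearMap.ext; intro a
  simp

lemma span_lemma : ∀ k : ℤ, k < 0 → ∀ θ : A18 →ₗ[ℚ] A18, IsDer18 k θ →
    d18 ∘ₗ θ - ((-1 : ℚ) ^ k) • (θ ∘ₗ d18) = 0 →
    ∃ (c : ℚ) (η : A18 →ₗ[ℚ] A18), IsDer18 (k - 1) η ∧
      θ = c • (if k = -5 then th1 else if k = -3 then th2 else 0)
          + (d18 ∘ₗ η - ((-1 : ℚ) ^ (k - 1)) • (η ∘ₗ d18)) := by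
  intro k hk θ hder hcoc
  have hLe : Leib k θ := hder.2
  have hx2 : θ xg ∈ gr18 (2 + k) := hder.1 2 xg xg_mem
  have hy5 : θ yg ∈ gr18 (5 + k) := hder.1 5 yg yg_mem
  have hcase : k = -1 ∨ k = -2 ∨ k = -3 ∨ k = -4 ∨ k = -5 ∨ k ≤ -6 := by omega
  rcases hcase with rfl | rfl | rfl | rfl | rfl | hle
  · -- k = -1
    rw [gr_bot (Or.inr (Or.inl (by norm_num)))] at hx2
    rw [show (5 + (-1:ℤ)) = 2*(2:ℕ) by norm_num, gr_eq_single 2] at hy5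
    obtain ⟨c, hc⟩ := Submodule.mem_span_singleton.mp hy5
    have hx : θ xg = 0 := by simpa using hx2
    refine ⟨0, (-c/3) • Dmap, ?_, ?_⟩
    · exact Dmap_smul_der _
    · rw [if_neg (by norm_num), if_neg (by norm_num), smul_zero, zero_add,
        show ((-1:ℚ) ^ ((-1:ℤ) - 1)) = 1 by norm_num, one_smul]
      have hcomm := Dmap_comm (-c/3)
      rw [hcomm, show (-3*(-c/3)) = c by ring]
      refine der_eq hLe (leib_snd (c • X^2) (-1) ⟨-1, by norm_num⟩ _
        (fun a => phiMap_apply _ a)) ?_ ?_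
      · rw [hx, phiMap_xg]
      · rw [← hc, phiMap_yg, ← inl_smul]
  · -- k = -2
    rw [gr_bot (Or.inr (Or.inr (by norm_num)))] at hy5
    have hy : θ yg = 0 := by simpa using hy5
    rw [show (2 + (-2:ℤ)) = 2*(0:ℕ) by norm_num, gr_eq_single 0] at hx2
    obtain ⟨c, hc⟩ := Submodule.mem_span_singleton.mp hx2
    rw [pow_zero] at hc
    have hc' : θ xg = inl (C c) := by rw [← hc, smul_inl_one]
    have hx3 : θ (inl (X^3)) = inl (C c * (3*X^2)) := theta_x3 hLe hc'
    have hzero := LinearMap.congr_fun hcoc yg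
    rw [LinearMap.sub_apply, LinearMap.comp_apply, LinearMap.smul_apply,
      LinearMap.comp_apply, hy, map_zero, d18_yg, hx3,
      show ((-1:ℚ) ^ (-2:ℤ)) = 1 by norm_num, one_smul, zero_sub,
      LinearMap.zero_apply, neg_eq_zero] at hzero
    have hp : C c * (3*(X:Polynomial ℚ)^2) = 0 := by
      simpa using congrArg fst hzero
    have hc0 : c = 0 := by
      have := congrArg (fun p => Polynomial.coeff p 2) hp
      simp [coeff_C_mul] at this
      exact this
    subst hc0
    have hx : θ xg = 0 := by rw [← hc, zero_smul]
    refine ⟨0, 0, zero_der _, ?_⟩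
    rw [der_zero hLe hx hy, bdry_zero_map, add_zero, zero_smul]
  · -- k = -3
    rw [gr_bot (Or.inl (by norm_num))] at hx2
    have hx : θ xg = 0 := by simpa using hx2
    rw [show (5 + (-3:ℤ)) = 2*(1:ℕ) by norm_num, gr_eq_single 1] at hy5
    obtain ⟨c, hc⟩ := Submodule.mem_span_singleton.mp hy5
    rw [pow_one] at hc
    refine ⟨c, 0, zero_der _, ?_⟩
    have hth : θ = c • th2 := by
      refine der_eq hLe (leib_smul th2_leib c) ?_ ?_
      · rw [hx, LinearMap.smul_apply, th2_xg, smul_zero]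
      · rw [← hc, LinearMap.smul_apply, th2_yg]
    rw [hth, bdry_zero_map, add_zero, if_neg (by norm_num), if_pos rfl]
  · -- k = -4
    rw [gr_bot (Or.inl (by norm_num))] at hx2
    rw [show (5 + (-4:ℤ)) = 1 by norm_num, gr_bot (Or.inr (Or.inl rfl))] at hy5
    have hx : θ xg = 0 := by simpa using hx2
    have hy : θ yg = 0 := by simpa using hy5
    refine ⟨0, 0, zero_der _, ?_⟩
    rw [der_zero hLe hx hy, bdry_zero_map, add_zero, zero_smul]
  · -- k = -5
    rw [gr_bot (Or.inl (by norm_num))] at hx2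
    have hx : θ xg = 0 := by simpa using hx2
    rw [show (5 + (-5:ℤ)) = 2*(0:ℕ) by norm_num, gr_eq_single 0] at hy5
    obtain ⟨c, hc⟩ := Submodule.mem_span_singleton.mp hy5
    rw [pow_zero] at hc
    refine ⟨c, 0, zero_der _, ?_⟩
    have hth : θ = c • th1 := by
      refine der_eq hLe (leib_smul th1_leib c) ?_ ?_
      · rw [hx, LinearMap.smul_apply, th1_xg, smul_zero]
      · rw [← hc, LinearMap.smul_apply, th1_yg]
    rw [hth, bdry_zero_map, add_zero, if_pos rfl]
  · -- k ≤ -6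
    rw [gr_bot (Or.inl (by omega))] at hx2
    rw [gr_bot (Or.inl (by omega))] at hy5
    have hx : θ xg = 0 := by simpa using hx2
    have hy : θ yg = 0 := by simpa using hy5
    refine ⟨0, 0, zero_der _, ?_⟩
    rw [der_zero hLe hx hy, bdry_zero_map, add_zero, zero_smul]
end Helpers7
section HelpersB
open Polynomial

local notation "IQ" => Ideal.span {(X : Polynomial ℚ)^3}
local notation "mkQ" => Ideal.Quotient.mk IQ

lemma grB_bot {n : ℤ} (h : n < 0 ∨ n = 1) : grB n = ⊥ := by
  rw [grB, show {b : B18 | ∃ k : ℕ, n = 2*k ∧ b = mkQ (X^k)} = ∅ from ?_,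
    Submodule.span_empty]
  rw [Set.eq_empty_iff_forall_notMem]
  rintro b ⟨k, hk, -⟩
  omega

lemma grB_zero : grB 0 = Submodule.span ℚ {(1 : B18)} := by
  rw [grB]
  congr 1
  ext b
  constructor
  · rintro ⟨k, hk, rfl⟩
    have hk0 : k = 0 := by omega
    subst hk0
    simp
  · rintro rfl
    exact ⟨0, by norm_num, by simp⟩

lemma xb_mem : (mkQ X : B18) ∈ grB 2 :=
  Submodule.subset_span ⟨1, by norm_num, by rw [pow_one]⟩

lemma one_memB : (1 : B18) ∈ grB 0 :=
  Submodule.subset_span ⟨0, by norm_num, by simp⟩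

lemma x2_ne : (mkQ (X^2) : B18) ≠ 0 := by
  rw [Ne, Ideal.Quotient.eq_zero_iff_mem, Ideal.mem_span_singleton]
  intro h
  have h2 := (X_pow_dvd_iff.mp h) 2 (by norm_num)
  rw [coeff_X_pow] at h2
  norm_num at h2

set_option synthInstance.maxHeartbeats 1000000 in
instance instB1 : SMulCommClass ℚ B18 B18 := inferInstance

set_option synthInstance.maxHeartbeats 1000000 in
instance instB2 : IsScalarTower ℚ B18 B18 := inferInstance

set_option synthInstance.maxHeartbeats 1000000 in
instance instB3 : NoZeroSMulDivisors ℚ B18 := inferInstance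

set_option maxHeartbeats 1000000 in
set_option synthInstance.maxHeartbeats 200000 in
lemma derB_vanish : ∀ k : ℤ, k < 0 → ∀ θ : B18 →ₗ[ℚ] B18, IsDerB k θ → θ = 0 := by
  intro k hk θ hder
  have hLe := hder.2
  have h1 : θ 1 = 0 := by
    have h := hLe 0 1 one_memB 1
    rw [mul_zero, zpow_zero, one_smul, one_mul, mul_one] at h
    rw [one_mul] at h
    exact left_eq_add.mp h
  have hx : θ (mkQ X) = 0 := by
    have hm : θ (mkQ X) ∈ grB (2 + k) := hder.1 2 _ xb_mem
    by_cases h2 : k = -2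
    · subst h2
      rw [show (2 + (-2:ℤ)) = 0 by norm_num, grB_zero] at hm
      obtain ⟨c, hc⟩ := Submodule.mem_span_singleton.mp hm
      have s2 : ((-1:ℚ)^((-2:ℤ)*2)) = 1 := sgn_k2 _
      have e1 : θ (mkQ X * mkQ X) = (2*c) • mkQ X := by
        rw [hLe 2 _ xb_mem, ← hc, s2, one_smul, smul_mul_assoc, one_mul,
          mul_smul_comm, mul_one, ← add_smul]
        congr 1
        ring
      have e2 : θ (mkQ X * (mkQ X * mkQ X)) = (3*c) • mkQ (X^2) := by
        rw [hLe 2 _ xb_mem, ← hc, s2, one_smul, e1, smul_mul_assoc, one_mul,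
          mul_smul_comm, ← add_smul, ← map_mul, ← sq]
        congr 1
        ring
      have hcube : mkQ X * (mkQ X * mkQ X) = (0:B18) := by
        rw [← map_mul, ← map_mul, show (X : Polynomial ℚ) * (X * X) = X^3 by ring,
          Ideal.Quotient.eq_zero_iff_mem]
        exact Ideal.subset_span rfl
      rw [hcube, map_zero] at e2
      rcases smul_eq_zero.mp e2.symm with h | h
      · have hc0 : c = 0 := by linarith
        rw [← hc, hc0, zero_smul]
      · exact absurd h x2_ne
    · rw [grB_bot (by omega)] at hm
      simpa using hm
  have hn : ∀ n : ℕ, θ (mkQ (X^n)) = 0 := by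
    intro n
    induction n with
    | zero => rw [pow_zero, map_one]; exact h1
    | succ n ih =>
      have hsplit : (mkQ (X^(n+1)) : B18) = mkQ X * mkQ (X^n) := by
        rw [← map_mul, ← pow_succ']
      rw [hsplit, hLe 2 _ xb_mem, hx, ih, zero_mul, mul_zero, smul_zero, add_zero]
  have halg : ∀ (a : ℚ) (p : Polynomial ℚ), (mkQ (a • p) : B18) = a • mkQ p := by
    intro a p
    have h := map_smul (Ideal.Quotient.mkₐ ℚ IQ) a p
    rw [Ideal.Quotient.mkₐ_eq_mk] at h
    exact h
  apply LinearMap.ext; intro b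
  obtain ⟨p, rfl⟩ := Ideal.Quotient.mk_surjective b
  rw [LinearMap.zero_apply]
  induction p using Polynomial.induction_on' with
  | add p q hp hq => rw [map_add, map_add, hp, hq, add_zero]
  | monomial n a =>
    rw [← smul_X_eq_monomial, halg, map_smul, hn, smul_zero]
end HelpersB

/-- For the minimal Sullivan model `(∧(x, y), d)` of `ℂP²`
(`deg x = 2`, `deg y = 5`, `d x = 0`, `d y = x³`):
(1) the homology of the complex of negative-degree derivations is
two-dimensional, spanned by the classes of the derivations `(y, 1)` and
`(y, x)` in degrees `-5` and `-3`;
(2) every negative-degree derivation of the graded algebra `ℚ[x]/(x³)` is zero;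
in particular, the quasi-isomorphism `(∧(x, y), d) → ℚ[x]/(x³)` (sending `x` to
`x` and `y` to `0`) does not induce an isomorphism between the homologies of
the derivation complexes. -/
theorem cp2_derivation_homology :
    -- (1) `(y,1)` and `(y,x)` are cocycles of degrees `-5`, `-3`, …
    (IsDer18 (-5) th1 ∧ d18 ∘ₗ th1 - ((-1 : ℚ) ^ (-5 : ℤ)) • (th1 ∘ₗ d18) = 0) ∧
    (IsDer18 (-3) th2 ∧ d18 ∘ₗ th2 - ((-1 : ℚ) ^ (-3 : ℤ)) • (th2 ∘ₗ d18) = 0) ∧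
    -- … their classes are nonzero, …
    (¬ Bdry18 (-5) th1) ∧ (¬ Bdry18 (-3) th2) ∧
    -- … and they span the homology of the negative-degree derivation complex
    (∀ k : ℤ, k < 0 → ∀ θ : A18 →ₗ[ℚ] A18, IsDer18 k θ →
      d18 ∘ₗ θ - ((-1 : ℚ) ^ k) • (θ ∘ₗ d18) = 0 →
      ∃ (c : ℚ) (η : A18 →ₗ[ℚ] A18), IsDer18 (k - 1) η ∧
        θ = c • (if k = -5 then th1 else if k = -3 then th2 else 0)
            + (d18 ∘ₗ η - ((-1 : ℚ) ^ (k - 1)) • (η ∘ₗ d18))) ∧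
    -- (2) all negative-degree derivations of `ℚ[x]/(x³)` vanish
    (∀ k : ℤ, k < 0 → ∀ θ : B18 →ₗ[ℚ] B18, IsDerB k θ → θ = 0) ∧
    -- in particular no map of the homologies of the derivation complexes can be
    -- injective in degree `-5`, so none is an isomorphism
    ¬ ∃ F : (A18 →ₗ[ℚ] A18) → (B18 →ₗ[ℚ] B18),
        ∀ θ, IsDer18 (-5) θ → d18 ∘ₗ θ - ((-1 : ℚ) ^ (-5 : ℤ)) • (θ ∘ₗ d18) = 0 →
          IsDerB (-5) (F θ) ∧ (F θ = 0 → Bdry18 (-5) θ) := by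
  refine ⟨⟨th1_der, th1_cocycle⟩, ⟨th2_der, th2_cocycle⟩, not_bdry_th1, not_bdry_th2,
    span_lemma, derB_vanish, ?_⟩
  rintro ⟨F, hF⟩
  obtain ⟨hFd, hFb⟩ := hF th1 th1_der th1_cocycle
  exact not_bdry_th1 (hFb (derB_vanish (-5) (by norm_num) _ hFd))
end
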